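/- Let 𝔭 be a discrete valuation on a field K with ord_𝔭(2) = 0, and let x, y, f ∈ K with y² = x³ + f. If 3 divides min(ord_𝔭(f), 3·ord_𝔭(x)), then for any square root z of f in an extension field L with valuation ord extending ord_𝔭 (with values in (1/2)ℤ or ℤ), 3 divides ord(z − y) + ord(z + y), and in fact 3 divides 2·min(ord(z), ord(y)) whenever min(ord(z−y), ord(z+y)) = min(ord(z), ord(y)). -/
import Mathlib


/- Local computation at an odd place: `ordK : K → ℤ` is a discrete valuation on `K` with
`ordK 2 = 0`, and `ordL : L → ℚ` is a valuation on an extension field `L` extending `ordK`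
(via the embedding `i : K →+* L`) with values in `(1/2)ℤ` (or `ℤ`).  If `y² = x³ + f` in `K`
and `3 ∣ min (ordK f) (3 ordK x)`, and `z ∈ L` is a square root of `f`, then
`3 ∣ ordL (z - y) + ordL (z + y)`, and `3 ∣ 2 min (ordL z) (ordL y)` whenever
`min (ordL (z - y)) (ordL (z + y)) = min (ordL z) (ordL y)`. -/
theorem stmt2 {K L : Type*} [Field K] [Field L] (i : K →+* L)
    (ordK : K → ℤ) (ordL : L → ℚ)
    (hKmul : ∀ x y : K, x ≠ 0 → y ≠ 0 → ordK (x * y) = ordK x + ordK y)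
    (hKadd : ∀ x y : K, x ≠ 0 → y ≠ 0 → x + y ≠ 0 → min (ordK x) (ordK y) ≤ ordK (x + y))
    (hLmul : ∀ x y : L, x ≠ 0 → y ≠ 0 → ordL (x * y) = ordL x + ordL y)
    (hLadd : ∀ x y : L, x ≠ 0 → y ≠ 0 → x + y ≠ 0 → min (ordL x) (ordL y) ≤ ordL (x + y))
    (hhalf : ∀ z : L, z ≠ 0 → ∃ n : ℤ, ordL z = (n : ℚ) / 2)
    (hext : ∀ a : K, a ≠ 0 → ordL (i a) = (ordK a : ℚ))
    (h2 : ordK 2 = 0)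
    (x y f : K) (hx : x ≠ 0) (hy : y ≠ 0) (hf : f ≠ 0)
    (hE : y ^ 2 = x ^ 3 + f)
    (hdvd : (3 : ℤ) ∣ min (ordK f) (3 * ordK x))
    (z : L) (hz : z ^ 2 = i f) (hz1 : z ≠ i y) (hz2 : z ≠ -(i y)) :
    (∃ n : ℤ, ordL (z - i y) + ordL (z + i y) = 3 * (n : ℚ)) ∧
    (min (ordL (z - i y)) (ordL (z + i y)) = min (ordL z) (ordL (i y)) →
      ∃ n : ℤ, 2 * min (ordL z) (ordL (i y)) = 3 * (n : ℚ)) := by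
  have hiy : i y ≠ 0 := by simpa using hy
  have hif : i f ≠ 0 := by simpa using hf
  have hx3 : x ^ 3 ≠ 0 := pow_ne_zero _ hx
  have hz0 : z ≠ 0 := by
    intro h
    rw [h] at hz
    exact hif (by simpa using hz.symm)
  have hzm : z - i y ≠ 0 := sub_ne_zero.mpr hz1
  have hzp : z + i y ≠ 0 := by
    intro h
    exact hz2 (eq_neg_of_add_eq_zero_left h)
  have hK1 : ordK 1 = 0 := by
    have := hKmul 1 1 one_ne_zero one_ne_zero
    simp at this
    linarith
  have hKneg1 : ordK (-1) = 0 := by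
    have := hKmul (-1) (-1) (by norm_num) (by norm_num)
    simp [hK1] at this
    linarith
  have hKneg : ∀ u : K, u ≠ 0 → ordK (-u) = ordK u := by
    intro u hu
    have := hKmul (-1) u (by norm_num) hu
    simpa [hKneg1] using this
  have hox3 : ordK (x ^ 3) = 3 * ordK x := by
    have h1 := hKmul x x hx hx
    have h2 := hKmul (x * x) x (mul_ne_zero hx hx) hx
    have : x ^ 3 = x * x * x := by ring
    rw [this, h2, h1]; ring
  have hoy2 : ordK (y ^ 2) = 2 * ordK y := by
    have h1 := hKmul y y hy hy
    have : y ^ 2 = y * y := by ring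
    rw [this, h1]; ring
  set a := ordK f with ha
  set b := ordK x with hb
  set c := ordK y with hc
  -- min (3b) a ≤ 2c
  have hsum : min (3 * b) a ≤ 2 * c := by
    have h := hKadd (x ^ 3) f hx3 hf (by rw [← hE]; exact pow_ne_zero _ hy)
    rw [hox3, ← hE, hoy2] at h
    exact h
  -- ordL values
  have hozL : 2 * ordL z = (a : ℚ) := by
    have h1 := hLmul z z hz0 hz0
    have h2 : z * z = i f := by rw [← hz]; ring
    rw [h2, hext f hf] at h1
    linarith
  have hoyL : ordL (i y) = (c : ℚ) := hext y hy
  constructor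
  · -- first part
    refine ⟨b, ?_⟩
    have hprod : (z - i y) * (z + i y) = i (-(x ^ 3)) := by
      have h1 : (z - i y) * (z + i y) = z ^ 2 - (i y) ^ 2 := by ring
      rw [h1, hz, ← map_pow, ← map_sub]
      congr 1
      linear_combination -hE
    have hm := hLmul (z - i y) (z + i y) hzm hzp
    rw [hprod, hext _ (neg_ne_zero.mpr hx3), hKneg _ hx3, hox3] at hm
    rw [← hm]
    push_cast
    ring
  · intro _
    rcases lt_trichotomy a (3 * b) with hab | hab | hab
    · -- a < 3b : 2c = a
      have h1 : a ≤ 2 * c := by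
        have := hsum; omega
      have h2 : min (2 * c) (3 * b) ≤ a := by
        have h := hKadd (y ^ 2) (-(x ^ 3)) (pow_ne_zero _ hy) (neg_ne_zero.mpr hx3)
          (by rw [hE]; simpa using hf)
        rw [hoy2, hKneg _ hx3, hox3] at h
        have he : y ^ 2 + -(x ^ 3) = f := by linear_combination hE
        rw [he] at h
        exact h
      have h2c : 2 * c = a := by omega
      obtain ⟨n, hn⟩ : (3 : ℤ) ∣ a := by
        have : min a (3 * b) = a := min_eq_left (le_of_lt hab)
        rwa [this] at hdvd
      refine ⟨n, ?_⟩
      have huv : ordL z = ordL (i y) := by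
        rw [hoyL]
        have : (2 : ℚ) * ordL z = 2 * (c : ℚ) := by
          rw [hozL]; exact_mod_cast congrArg (Int.cast : ℤ → ℚ) h2c.symm
        linarith
      rw [huv, min_self]
      have h3 : (a : ℚ) = 3 * (n : ℚ) := by exact_mod_cast hn
      linarith [hozL, huv]
    · -- a = 3b
      refine ⟨b, ?_⟩
      have h1 : (3 : ℤ) * b ≤ 2 * c := by omega
      have hle : ordL z ≤ ordL (i y) := by
        rw [hoyL]
        have : (a : ℚ) ≤ 2 * (c : ℚ) := by exact_mod_cast (by omega : a ≤ 2 * c)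
        linarith [hozL]
      rw [min_eq_left hle]
      have : (a : ℚ) = 3 * (b : ℚ) := by exact_mod_cast hab
      linarith [hozL]
    · -- a > 3b : 2c = 3b
      refine ⟨b, ?_⟩
      have h1 : 3 * b ≤ 2 * c := by
        have := hsum; omega
      have h2 : min (2 * c) a ≤ 3 * b := by
        have h := hKadd (y ^ 2) (-f) (pow_ne_zero _ hy) (neg_ne_zero.mpr hf)
          (by rw [hE]; simpa using hx3)
        rw [hoy2, hKneg _ hf] at h
        have he : y ^ 2 + -f = x ^ 3 := by linear_combination hE
        rw [he, hox3] at h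
        exact h
      have h2c : 2 * c = 3 * b := by omega
      have hle : ordL (i y) ≤ ordL z := by
        rw [hoyL]
        have : 2 * (c : ℚ) ≤ (a : ℚ) := by exact_mod_cast (by omega : 2 * c ≤ a)
        linarith [hozL]
      rw [min_eq_right hle, hoyL]
      have : 2 * (c : ℚ) = 3 * (b : ℚ) := by exact_mod_cast h2c
      linarith
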